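/- Let A be a finite lattice and let q_u (u ∈ A) be a family of commuting idempotents in a K-algebra E with q_u q_v = q_{u ∧ v} for all u, v, and such that the q_u are linearly independent over K. Define q_v* := Σ_{u ≤ v} μ(u,v) q_u. Then the q_v* are pairwise orthogonal nonzero idempotents with Σ_{u ≤ v} q_u* = q_v for all v; in particular if A has a top element ⊤ then Σ_{u ∈ A} q_u* = q_⊤. -/
import Mathlib

open Finset

section QStarAux

variable {K : Type*} [Field K]
variable {A : Type*} [Lattice A] [Fintype A] [DecidableEq A]
  [DecidableRel ((· ≤ ·) : A → A → Prop)]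
variable (μ : A → A → ℤ)

lemma qStar_rowSum (hrefl : ∀ u : A, μ u u = 1)
    (hzero : ∀ u w : A, ¬ u ≤ w → μ u w = 0)
    (hrec : ∀ u w : A, u < w →
      (∑ v ∈ Finset.univ.filter (fun v => u ≤ v ∧ v ≤ w), μ v w) = 0)
    (t u : A) :
    ∑ w ∈ univ.filter (fun w => t ≤ w), ((μ w u : ℤ) : K) =
      if t = u then 1 else 0 := by
  have h1 : ∑ w ∈ univ.filter (fun w => t ≤ w), ((μ w u : ℤ) : K)
      = ∑ w ∈ univ.filter (fun w => t ≤ w ∧ w ≤ u), ((μ w u : ℤ) : K) := by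
    rw [Finset.sum_filter, Finset.sum_filter]
    refine Finset.sum_congr rfl fun w _ => ?_
    by_cases h : t ≤ w
    · by_cases h2 : w ≤ u <;> simp [h, h2, hzero w u]
    · simp [h]
  rw [h1]
  push_cast [← Int.cast_sum]
  rcases eq_or_ne t u with rfl | hne
  · have : univ.filter (fun w => t ≤ w ∧ w ≤ t) = {t} := by
      ext w; simp [le_antisymm_iff, and_comm]
    rw [this]; simp [hrefl]
  · by_cases hle : t ≤ u
    · rw [hrec t u (lt_of_le_of_ne hle hne)]; simp [hne]
    · have : univ.filter (fun w => t ≤ w ∧ w ≤ u) = ∅ := by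
        ext w; simp; intro h1 h2; exact hle (h1.trans h2)
      rw [this]; simp [hne]

lemma qStar_zeta_mul_mu (hrefl : ∀ u : A, μ u u = 1)
    (hzero : ∀ u w : A, ¬ u ≤ w → μ u w = 0)
    (hrec : ∀ u w : A, u < w →
      (∑ v ∈ Finset.univ.filter (fun v => u ≤ v ∧ v ≤ w), μ v w) = 0) :
    (Matrix.of fun u v : A => if u ≤ v then (1:K) else 0) *
      (Matrix.of fun u v : A => ((μ u v : ℤ) : K)) = 1 := by
  ext t u
  rw [Matrix.mul_apply, Matrix.one_apply]
  rw [← qStar_rowSum μ hrefl hzero hrec t u, Finset.sum_filter]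
  refine Finset.sum_congr rfl fun w _ => ?_
  by_cases h : t ≤ w <;> simp [h, Matrix.of_apply]

lemma qStar_mu_mul_zeta (hrefl : ∀ u : A, μ u u = 1)
    (hzero : ∀ u w : A, ¬ u ≤ w → μ u w = 0)
    (hrec : ∀ u w : A, u < w →
      (∑ v ∈ Finset.univ.filter (fun v => u ≤ v ∧ v ≤ w), μ v w) = 0) :
    (Matrix.of fun u v : A => ((μ u v : ℤ) : K)) *
      (Matrix.of fun u v : A => if u ≤ v then (1:K) else 0) = 1 :=
  mul_eq_one_comm.mp (qStar_zeta_mul_mu μ hrefl hzero hrec)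

lemma qStar_colSum (hrefl : ∀ u : A, μ u u = 1)
    (hzero : ∀ u w : A, ¬ u ≤ w → μ u w = 0)
    (hrec : ∀ u w : A, u < w →
      (∑ v ∈ Finset.univ.filter (fun v => u ≤ v ∧ v ≤ w), μ v w) = 0)
    (w v : A) :
    ∑ u ∈ univ.filter (fun u => u ≤ v), ((μ w u : ℤ) : K) =
      if w = v then 1 else 0 := by
  have := congrFun (congrFun (qStar_mu_mul_zeta μ hrefl hzero hrec (K := K)) w) v
  rw [Matrix.mul_apply, Matrix.one_apply] at this
  rw [← this, Finset.sum_filter]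
  refine Finset.sum_congr rfl fun u _ => ?_
  by_cases h : u ≤ v <;> simp [h, Matrix.of_apply]

lemma qStar_zeta_inj (hrefl : ∀ u : A, μ u u = 1)
    (hzero : ∀ u w : A, ¬ u ≤ w → μ u w = 0)
    (hrec : ∀ u w : A, u < w →
      (∑ v ∈ Finset.univ.filter (fun v => u ≤ v ∧ v ≤ w), μ v w) = 0)
    (c d : A → K)
    (h : ∀ t : A, ∑ s ∈ univ.filter (fun s => t ≤ s), c s =
        ∑ s ∈ univ.filter (fun s => t ≤ s), d s) : c = d := by
  set Z : Matrix A A K := Matrix.of fun u v : A => if u ≤ v then (1:K) else 0 with hZ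
  set M : Matrix A A K := Matrix.of fun u v : A => ((μ u v : ℤ) : K) with hM
  have hmv : Z.mulVec c = Z.mulVec d := by
    funext t
    simp only [Matrix.mulVec, dotProduct]
    have e : ∀ e : A → K, (∑ s, Z t s * e s) =
        ∑ s ∈ univ.filter (fun s => t ≤ s), e s := by
      intro e
      rw [Finset.sum_filter]
      refine Finset.sum_congr rfl fun s _ => ?_
      by_cases hts : t ≤ s <;> simp [hZ, hts, Matrix.of_apply]
    rw [e c, e d, h t]
  have : M.mulVec (Z.mulVec c) = M.mulVec (Z.mulVec d) := by rw [hmv]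
  rwa [Matrix.mulVec_mulVec, Matrix.mulVec_mulVec,
    qStar_mu_mul_zeta μ hrefl hzero hrec, Matrix.one_mulVec, Matrix.one_mulVec] at this

lemma qStar_coeff_eq (hrefl : ∀ u : A, μ u u = 1)
    (hzero : ∀ u w : A, ¬ u ≤ w → μ u w = 0)
    (hrec : ∀ u w : A, u < w →
      (∑ v ∈ Finset.univ.filter (fun v => u ≤ v ∧ v ≤ w), μ v w) = 0)
    (u v : A) :
    (fun s => ∑ w ∈ univ.filter (· ≤ u), ∑ w' ∈ univ.filter (· ≤ v),
        (if w ⊓ w' = s then ((μ w u : ℤ) : K) * ((μ w' v : ℤ) : K) else 0)) =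
    (fun s => if u = v then ((μ s u : ℤ) : K) else 0) := by
  apply qStar_zeta_inj μ hrefl hzero hrec
  intro t
  have lhs : ∑ s ∈ univ.filter (fun s => t ≤ s),
      ∑ w ∈ univ.filter (· ≤ u), ∑ w' ∈ univ.filter (· ≤ v),
        (if w ⊓ w' = s then ((μ w u : ℤ) : K) * ((μ w' v : ℤ) : K) else 0) =
      (if t = u then (1:K) else 0) * (if t = v then (1:K) else 0) := by
    rw [Finset.sum_comm]
    have step1 : ∀ w : A, ∑ s ∈ univ.filter (fun s => t ≤ s),
        ∑ w' ∈ univ.filter (· ≤ v),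
          (if w ⊓ w' = s then ((μ w u : ℤ) : K) * ((μ w' v : ℤ) : K) else 0) =
        ∑ w' ∈ univ.filter (· ≤ v),
          (if t ≤ w then ((μ w u : ℤ) : K) else 0) *
          (if t ≤ w' then ((μ w' v : ℤ) : K) else 0) := by
      intro w
      rw [Finset.sum_comm]
      refine Finset.sum_congr rfl fun w' _ => ?_
      rw [Finset.sum_ite_eq]
      by_cases h1 : t ≤ w <;> by_cases h2 : t ≤ w' <;>
        simp [Finset.mem_filter, h1, h2, le_inf_iff]
    rw [Finset.sum_congr rfl fun w _ => step1 w, ← Finset.sum_mul_sum]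
    congr 1
    · rw [← qStar_rowSum μ hrefl hzero hrec t u, Finset.sum_filter, Finset.sum_filter]
      refine Finset.sum_congr rfl fun w _ => ?_
      by_cases h1 : w ≤ u <;> by_cases h2 : t ≤ w <;>
        simp [h1, h2, hzero w u]
    · rw [← qStar_rowSum μ hrefl hzero hrec t v, Finset.sum_filter, Finset.sum_filter]
      refine Finset.sum_congr rfl fun w _ => ?_
      by_cases h1 : w ≤ v <;> by_cases h2 : t ≤ w <;>
        simp [h1, h2, hzero w v]
  rw [lhs]
  rcases eq_or_ne u v with rfl | hne
  · have h2 : (∑ s ∈ univ.filter (fun s => t ≤ s),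
        if u = u then ((μ s u : ℤ) : K) else 0) = if t = u then 1 else 0 := by
      simp only [if_pos rfl]
      exact qStar_rowSum μ hrefl hzero hrec t u
    rw [h2]
    by_cases h : t = u <;> simp [h]
  · have h3 : ∀ s, (if u = v then ((μ s u : ℤ) : K) else 0) = 0 := fun s => if_neg hne
    simp only [h3, Finset.sum_const_zero]
    by_cases h1 : t = u <;> by_cases h2 : t = v
    · exact absurd (h1.symm.trans h2) hne
    all_goals simp [h1, h2, hne, hne.symm]

end QStarAux

/-- Let `A` be a finite lattice and `(q_u)_{u ∈ A}` a linearly independent family of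
commuting idempotents in a `K`-algebra `E` with `q_u q_v = q_{u ⊓ v}`. Then the elements
`q_v* := ∑_{u ≤ v} μ(u,v) q_u` are pairwise orthogonal nonzero idempotents with
`∑_{u ≤ v} q_u* = q_v` for all `v`; in particular if `A` has a top element `⊤` then
`∑_{u ∈ A} q_u* = q_⊤`. -/
theorem qStar_orthogonal_idempotents
    {K : Type*} [Field K] {E : Type*} [Ring E] [Algebra K E]
    {A : Type*} [Lattice A] [Fintype A] [DecidableEq A]
    [DecidableRel ((· ≤ ·) : A → A → Prop)]
    (q : A → E)
    (hq : ∀ u v : A, q u * q v = q (u ⊓ v))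
    (hind : LinearIndependent K q)
    (μ : A → A → ℤ)
    (hrefl : ∀ u : A, μ u u = 1)
    (hzero : ∀ u w : A, ¬ u ≤ w → μ u w = 0)
    (hrec : ∀ u w : A, u < w →
      (∑ v ∈ Finset.univ.filter (fun v => u ≤ v ∧ v ≤ w), μ v w) = 0) :
    (∀ u : A, (∑ w ∈ Finset.univ.filter (· ≤ u), ((μ w u : ℤ) : K) • q w) *
        (∑ w ∈ Finset.univ.filter (· ≤ u), ((μ w u : ℤ) : K) • q w) =
        (∑ w ∈ Finset.univ.filter (· ≤ u), ((μ w u : ℤ) : K) • q w)) ∧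
    (∀ u v : A, u ≠ v →
      (∑ w ∈ Finset.univ.filter (· ≤ u), ((μ w u : ℤ) : K) • q w) *
        (∑ w ∈ Finset.univ.filter (· ≤ v), ((μ w v : ℤ) : K) • q w) = 0) ∧
    (∀ u : A, (∑ w ∈ Finset.univ.filter (· ≤ u), ((μ w u : ℤ) : K) • q w) ≠ 0) ∧
    (∀ v : A, (∑ u ∈ Finset.univ.filter (· ≤ v),
        ∑ w ∈ Finset.univ.filter (· ≤ u), ((μ w u : ℤ) : K) • q w) = q v) ∧
    (∀ m : A, IsTop m →
      (∑ u : A, ∑ w ∈ Finset.univ.filter (· ≤ u), ((μ w u : ℤ) : K) • q w) = q m) := by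
  set e : A → E := fun u => ∑ w ∈ Finset.univ.filter (· ≤ u), ((μ w u : ℤ) : K) • q w with he
  -- general product formula
  have key : ∀ u v : A, e u * e v =
      ∑ s : A, (if u = v then ((μ s u : ℤ) : K) else 0) • q s := by
    intro u v
    have expand : e u * e v =
        ∑ s : A, (∑ w ∈ univ.filter (· ≤ u), ∑ w' ∈ univ.filter (· ≤ v),
          (if w ⊓ w' = s then ((μ w u : ℤ) : K) * ((μ w' v : ℤ) : K) else 0)) • q s := by
      rw [he]
      simp only
      rw [Finset.sum_mul]
      have h1 : ∀ w ∈ univ.filter (· ≤ u),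
          (((μ w u : ℤ) : K) • q w) * (∑ w' ∈ univ.filter (· ≤ v), ((μ w' v : ℤ) : K) • q w') =
          ∑ w' ∈ univ.filter (· ≤ v),
            (((μ w u : ℤ) : K) * ((μ w' v : ℤ) : K)) • q (w ⊓ w') := by
        intro w _
        rw [Finset.mul_sum]
        refine Finset.sum_congr rfl fun w' _ => ?_
        rw [smul_mul_assoc, mul_smul_comm, smul_smul, hq]
      rw [Finset.sum_congr rfl h1]
      have h2 : ∀ (w w' : A), (((μ w u : ℤ) : K) * ((μ w' v : ℤ) : K)) • q (w ⊓ w') =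
          ∑ s : A, (if w ⊓ w' = s then ((μ w u : ℤ) : K) * ((μ w' v : ℤ) : K) else 0) • q s := by
        intro w w'
        simp only [ite_smul, zero_smul]
        rw [Finset.sum_ite_eq]
        simp
      rw [Finset.sum_congr rfl fun w _ => Finset.sum_congr rfl fun w' _ => h2 w w']
      rw [Finset.sum_congr rfl fun w _ => Finset.sum_comm, Finset.sum_comm]
      refine Finset.sum_congr rfl fun s _ => ?_
      simp only [Finset.sum_smul]
    rw [expand]
    refine Finset.sum_congr rfl fun s _ => ?_
    rw [congrFun (qStar_coeff_eq μ hrefl hzero hrec u v) s]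
  -- full-sum description of e u
  have full : ∀ u : A, (∑ s : A, ((μ s u : ℤ) : K) • q s) = e u := by
    intro u
    rw [he]
    simp only
    rw [← Finset.sum_filter_add_sum_filter_not univ (· ≤ u)
      (fun s => ((μ s u : ℤ) : K) • q s)]
    have : ∑ s ∈ univ.filter (fun s => ¬ s ≤ u), ((μ s u : ℤ) : K) • q s = 0 := by
      refine Finset.sum_eq_zero fun s hs => ?_
      rw [hzero s u (Finset.mem_filter.mp hs).2]
      simp
    rw [this, add_zero]
  have hsum : ∀ v : A, (∑ u ∈ Finset.univ.filter (· ≤ v), e u) = q v := by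
    intro v
    have step : ∀ u : A, e u = ∑ w : A, (if w ≤ u then ((μ w u : ℤ) : K) else 0) • q w := by
      intro u
      rw [he]
      simp only
      rw [Finset.sum_filter]
      refine Finset.sum_congr rfl fun w _ => ?_
      by_cases h : w ≤ u <;> simp [h]
    rw [Finset.sum_congr rfl fun u _ => step u, Finset.sum_comm]
    have coeff : ∀ w : A, ∑ u ∈ univ.filter (· ≤ v),
        (if w ≤ u then ((μ w u : ℤ) : K) else 0) • q w =
        (if w = v then (1:K) else 0) • q w := by
      intro w
      rw [← Finset.sum_smul]
      congr 1
      rw [← qStar_colSum μ hrefl hzero hrec w v]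
      refine Finset.sum_congr rfl fun u' _ => ?_
      by_cases h : w ≤ u' <;> simp [h, hzero w u']
    rw [Finset.sum_congr rfl fun w _ => coeff w]
    simp only [ite_smul, zero_smul, one_smul]
    rw [Finset.sum_ite_eq']
    simp
  refine ⟨?_, ?_, ?_, ?_, ?_⟩
  · intro u
    have : e u * e u = ∑ s : A, ((μ s u : ℤ) : K) • q s := by
      simpa using key u u
    show e u * e u = e u
    rw [this, full]
  · intro u v huv
    have := key u v
    simp only [if_neg huv, zero_smul, Finset.sum_const_zero] at this
    exact this
  · intro u h0
    have h0 : e u = 0 := h0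
    have hg : (∑ w : A, (if w ≤ u then ((μ w u : ℤ) : K) else 0) • q w) = 0 := by
      rw [← h0, he]
      simp only
      rw [Finset.sum_filter]
      refine Finset.sum_congr rfl fun w _ => ?_
      by_cases h : w ≤ u <;> simp [h]
    have := Fintype.linearIndependent_iff.mp hind
      (fun w => if w ≤ u then ((μ w u : ℤ) : K) else 0) hg u
    rw [if_pos le_rfl, hrefl u] at this
    exact one_ne_zero (by exact_mod_cast this)
  · exact hsum
  · intro m hm
    have hfilter : Finset.univ.filter (· ≤ m) = (Finset.univ : Finset A) := by
      ext w; simp [hm w]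
    exact (Finset.sum_congr hfilter.symm (fun _ _ => rfl)).trans (hsum m)
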